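/- Let Z be a type, d ≥ 1, and ℓ : ℝ^d → Z → Z → ℝ a nonnegative pairwise loss, differentiable in its first argument with ‖∇ℓ(w, z, z')‖ ≤ L for all w, z, z', and with ρ = sup_{w,z,z'} ℓ(w, z, z') < ∞. Let S, S' : Fin n → Z agree at all indices except possibly at a single index i₀ (n ≥ 2), let α_t ≥ 0 be step sizes, and for each path ξ : Fin T → Fin n let w_T(ξ), w'_T(ξ) denote the SGD iterates for pairwise learning at step T based on S, S', with δ_T(ξ) = ‖w_T(ξ) − w'_T(ξ)‖. For t₀ ∈ {2,…,min(n,T)}, let E_{t₀} = {ξ : ξ_t ≠ i₀ for all 1 ≤ t ≤ t₀} (on E_{t₀} the first t₀ iterates based on S and S' coincide). Then, under the random selection rule, for all z, z' ∈ Z: (1/n^T)·Σ_{ξ} |ℓ(w_T(ξ), z, z') − ℓ(w'_T(ξ), z, z')| ≤ (t₀/n)·ρ + L·(Σ_{ξ ∈ E_{t₀}} δ_T(ξ)) / card(E_{t₀}). -/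
import Mathlib

/-- **Lemma 8 (random selection rule).** For a nonnegative, `L`-Lipschitz pairwise loss bounded
by `ρ`, if `S` and `S'` agree except possibly at the index `i₀`, then for every
`t₀ ∈ {2,…,min(n,T)}`, with `E = {ξ : ξ_t ≠ i₀ for 1 ≤ t ≤ t₀}`,
`E_ξ |ℓ(w_T, z, z') − ℓ(w'_T, z, z')| ≤ (t₀/n)·ρ + L·(Σ_{ξ ∈ E} δ_T(ξ))/card E`. -/
theorem pairwise_sgd_burn_in_bound
    {Z : Type*} (d : ℕ) (hd : 1 ≤ d) (n T : ℕ) (hn : 2 ≤ n)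
    (ℓ : EuclideanSpace ℝ (Fin d) → Z → Z → ℝ)
    (hnonneg : ∀ (v : EuclideanSpace ℝ (Fin d)) (z z' : Z), 0 ≤ ℓ v z z')
    (g : EuclideanSpace ℝ (Fin d) → Z → Z → EuclideanSpace ℝ (Fin d)) (L ρ : ℝ)
    (hdiff : ∀ (v : EuclideanSpace ℝ (Fin d)) (z z' : Z),
      HasGradientAt (fun u => ℓ u z z') (g v z z') v)
    (hL : ∀ (v : EuclideanSpace ℝ (Fin d)) (z z' : Z), ‖g v z z'‖ ≤ L)
    (hρ : ∀ (v : EuclideanSpace ℝ (Fin d)) (z z' : Z), ℓ v z z' ≤ ρ)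
    (S S' : Fin n → Z) (i₀ : Fin n) (hSS' : ∀ i, i ≠ i₀ → S i = S' i)
    (α : ℕ → ℝ) (hα : ∀ s, 0 ≤ α s)
    (w w' : (Fin T → Fin n) → ℕ → EuclideanSpace ℝ (Fin d))
    (hw1 : ∀ ξ, w ξ 1 = 0) (hw1' : ∀ ξ, w' ξ 1 = 0)
    (hrec : ∀ (ξ : Fin T → Fin n) (s : ℕ) (hs2 : 2 ≤ s) (hsT : s ≤ T),
      w ξ s = w ξ (s - 1) - (α (s - 1) / ((s : ℝ) - 1)) •
        ∑ j : Fin (s - 1), g (w ξ (s - 1)) (S (ξ ⟨s - 1, by omega⟩))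
          (S (ξ ⟨(j : ℕ), lt_of_lt_of_le j.isLt (by omega)⟩)))
    (hrec' : ∀ (ξ : Fin T → Fin n) (s : ℕ) (hs2 : 2 ≤ s) (hsT : s ≤ T),
      w' ξ s = w' ξ (s - 1) - (α (s - 1) / ((s : ℝ) - 1)) •
        ∑ j : Fin (s - 1), g (w' ξ (s - 1)) (S' (ξ ⟨s - 1, by omega⟩))
          (S' (ξ ⟨(j : ℕ), lt_of_lt_of_le j.isLt (by omega)⟩)))
    (t₀ : ℕ) (ht₀2 : 2 ≤ t₀) (ht₀n : t₀ ≤ n) (ht₀T : t₀ ≤ T) :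
    ∀ z z' : Z,
      (1 / (n : ℝ) ^ T) * ∑ ξ : Fin T → Fin n, |ℓ (w ξ T) z z' - ℓ (w' ξ T) z z'| ≤
        ((t₀ : ℝ) / (n : ℝ)) * ρ +
          L * (∑ ξ ∈ Finset.univ.filter
                  (fun ξ : Fin T → Fin n => ∀ s : Fin T, (s : ℕ) < t₀ → ξ s ≠ i₀),
                ‖w ξ T - w' ξ T‖) /
            ((Finset.univ.filter
                (fun ξ : Fin T → Fin n => ∀ s : Fin T, (s : ℕ) < t₀ → ξ s ≠ i₀)).card : ℝ) := by
  intro z z'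
  classical
  set P : (Fin T → Fin n) → Prop := fun ξ => ∀ s : Fin T, (s : ℕ) < t₀ → ξ s ≠ i₀ with hP
  set E : Finset (Fin T → Fin n) := Finset.univ.filter P with hEdef
  set N : Finset (Fin T → Fin n) := Finset.univ.filter (fun ξ => ¬ P ξ) with hNdef
  have hn0 : (0:ℝ) < n := by positivity
  have hnT : (0:ℝ) < (n:ℝ) ^ T := by positivity
  have hL0 : 0 ≤ L := le_trans (norm_nonneg _) (hL 0 z z')
  have hρ0 : 0 ≤ ρ := le_trans (hnonneg 0 z z') (hρ 0 z z')
  -- Lipschitz bound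
  have hlip : ∀ u v : EuclideanSpace ℝ (Fin d),
      |ℓ u z z' - ℓ v z z'| ≤ L * ‖u - v‖ := by
    intro u v
    have := Convex.norm_image_sub_le_of_norm_hasFDerivWithin_le
      (f := fun x => ℓ x z z')
      (f' := fun x => (InnerProductSpace.toDual ℝ _) (g x z z'))
      (fun x _ => ((hdiff x z z').hasFDerivAt).hasFDerivWithinAt)
      (fun x _ => by
        rw [LinearIsometryEquiv.norm_map]; exact hL x z z')
      convex_univ (Set.mem_univ v) (Set.mem_univ u)
    simpa [Real.norm_eq_abs] using this
  -- bounded difference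
  have hbd : ∀ u v : EuclideanSpace ℝ (Fin d),
      |ℓ u z z' - ℓ v z z'| ≤ ρ := by
    intro u v
    have h1 := hnonneg u z z'; have h2 := hnonneg v z z'
    have h3 := hρ u z z'; have h4 := hρ v z z'
    rw [abs_sub_le_iff]; constructor <;> linarith
  -- E is nonempty
  have hEne : 0 < E.card := by
    haveI : Nontrivial (Fin n) := Fin.nontrivial_iff_two_le.mpr hn
    obtain ⟨i, hi⟩ := exists_ne (α := Fin n) i₀
    refine Finset.card_pos.2 ⟨fun _ => i, ?_⟩
    simp only [hEdef, Finset.mem_filter, Finset.mem_univ, true_and, hP]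
    exact fun s _ => hi
  have hEcard : (E.card : ℝ) ≤ (n:ℝ) ^ T := by
    have : E.card ≤ Fintype.card (Fin T → Fin n) := Finset.card_le_univ _
    have hc : Fintype.card (Fin T → Fin n) = n ^ T := by
      simp [Fintype.card_fun]
    rw [hc] at this
    exact_mod_cast this
  -- counting: for each coordinate s, fixing ξ s = i₀
  have hfix : ∀ s : Fin T,
      (Finset.univ.filter (fun ξ : Fin T → Fin n => ξ s = i₀)).card * n = n ^ T := by
    intro s
    have hbij : ((Finset.univ.filter (fun ξ : Fin T → Fin n => ξ s = i₀)) ×ˢ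
        (Finset.univ : Finset (Fin n))).card = (Finset.univ : Finset (Fin T → Fin n)).card := by
      refine Finset.card_bij' (fun p _ => Function.update p.1 s p.2)
        (fun ξ _ => (Function.update ξ s i₀, ξ s)) (fun p hp => Finset.mem_univ _)
        (fun ξ _ => ?_) (fun p hp => ?_) (fun ξ _ => ?_)
      · simp [Function.update_idem]
      · obtain ⟨ζ, k⟩ := p
        simp only [Finset.mem_product, Finset.mem_filter, Finset.mem_univ, true_and,
          and_true] at hp
        have hζ : Function.update ζ s i₀ = ζ := by
          rw [← hp]; exact Function.update_eq_self s ζ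
        simp [Function.update_idem, hζ]
      · simp [Function.update_idem, Function.update_eq_self]
    have := hbij
    rw [Finset.card_product, Finset.card_univ, Finset.card_univ, Fintype.card_fun,
      Fintype.card_fin, Fintype.card_fin] at this
    exact this
  -- complement bound
  have hNcard : N.card * n ≤ t₀ * n ^ T := by
    have hsub : N ⊆ (Finset.univ.filter (fun s : Fin T => (s:ℕ) < t₀)).biUnion
        (fun s => Finset.univ.filter (fun ξ : Fin T → Fin n => ξ s = i₀)) := by
      intro ξ hξ
      simp only [hNdef, Finset.mem_filter, Finset.mem_univ, true_and, hP] at hξ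
      push_neg at hξ
      obtain ⟨s, hs, hsi⟩ := hξ
      exact Finset.mem_biUnion.2 ⟨s, by simp [hs], by simp [hsi]⟩
    have h1 : N.card ≤ ∑ s ∈ Finset.univ.filter (fun s : Fin T => (s:ℕ) < t₀),
        (Finset.univ.filter (fun ξ : Fin T → Fin n => ξ s = i₀)).card :=
      le_trans (Finset.card_le_card hsub) Finset.card_biUnion_le
    have h2 : (Finset.univ.filter (fun s : Fin T => (s:ℕ) < t₀)).card ≤ t₀ := by
      have : (Finset.univ.filter (fun s : Fin T => (s:ℕ) < t₀)).card =
          ((Finset.univ.filter (fun s : Fin T => (s:ℕ) < t₀)).image Fin.val).card := by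
        rw [Finset.card_image_of_injective _ Fin.val_injective]
      rw [this]
      refine le_trans (Finset.card_le_card ?_) (by simp : (Finset.range t₀).card ≤ t₀)
      intro x hx
      simp only [Finset.mem_image, Finset.mem_filter] at hx
      obtain ⟨s, ⟨_, hs⟩, rfl⟩ := hx
      exact Finset.mem_range.2 hs
    calc N.card * n ≤ (∑ s ∈ Finset.univ.filter (fun s : Fin T => (s:ℕ) < t₀),
            (Finset.univ.filter (fun ξ : Fin T → Fin n => ξ s = i₀)).card) * n :=
          Nat.mul_le_mul_right _ h1
      _ = ∑ s ∈ Finset.univ.filter (fun s : Fin T => (s:ℕ) < t₀),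
            ((Finset.univ.filter (fun ξ : Fin T → Fin n => ξ s = i₀)).card * n) := by
          rw [Finset.sum_mul]
      _ = ∑ s ∈ Finset.univ.filter (fun s : Fin T => (s:ℕ) < t₀), n ^ T := by
          exact Finset.sum_congr rfl (fun s _ => hfix s)
      _ = (Finset.univ.filter (fun s : Fin T => (s:ℕ) < t₀)).card * n ^ T := by
          rw [Finset.sum_const, smul_eq_mul]
      _ ≤ t₀ * n ^ T := Nat.mul_le_mul_right _ h2
  -- split the sum
  have hsplit : ∑ ξ : Fin T → Fin n, |ℓ (w ξ T) z z' - ℓ (w' ξ T) z z'| =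
      ∑ ξ ∈ E, |ℓ (w ξ T) z z' - ℓ (w' ξ T) z z'| +
      ∑ ξ ∈ N, |ℓ (w ξ T) z z' - ℓ (w' ξ T) z z'| :=
    (Finset.sum_filter_add_sum_filter_not _ _ _).symm
  have hA0 : 0 ≤ ∑ ξ ∈ E, ‖w ξ T - w' ξ T‖ :=
    Finset.sum_nonneg (fun _ _ => norm_nonneg _)
  have hEbound : ∑ ξ ∈ E, |ℓ (w ξ T) z z' - ℓ (w' ξ T) z z'| ≤
      L * ∑ ξ ∈ E, ‖w ξ T - w' ξ T‖ := by
    rw [Finset.mul_sum]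
    exact Finset.sum_le_sum (fun ξ _ => hlip _ _)
  have hNbound : ∑ ξ ∈ N, |ℓ (w ξ T) z z' - ℓ (w' ξ T) z z'| ≤ (N.card : ℝ) * ρ := by
    calc ∑ ξ ∈ N, |ℓ (w ξ T) z z' - ℓ (w' ξ T) z z'| ≤ ∑ ξ ∈ N, ρ :=
          Finset.sum_le_sum (fun ξ _ => hbd _ _)
      _ = (N.card : ℝ) * ρ := by rw [Finset.sum_const, nsmul_eq_mul]
  have hEc0 : (0:ℝ) < (E.card : ℝ) := by exact_mod_cast hEne
  -- final assembly
  have key1 : (1 / (n:ℝ) ^ T) * (L * ∑ ξ ∈ E, ‖w ξ T - w' ξ T‖) ≤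
      L * (∑ ξ ∈ E, ‖w ξ T - w' ξ T‖) / (E.card : ℝ) := by
    rw [one_div, inv_mul_eq_div]
    gcongr
  have key2 : (1 / (n:ℝ) ^ T) * ((N.card : ℝ) * ρ) ≤ ((t₀:ℝ) / n) * ρ := by
    have h : (N.card : ℝ) * n ≤ (t₀ : ℝ) * (n:ℝ) ^ T := by exact_mod_cast hNcard
    have h' := mul_le_mul_of_nonneg_right h hρ0
    have e1 : (1 / (n:ℝ) ^ T) * ((N.card : ℝ) * ρ) = ((N.card : ℝ) * ρ) / (n:ℝ) ^ T := by ring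
    have e2 : ((t₀:ℝ) / n) * ρ = ((t₀:ℝ) * ρ) / n := by ring
    rw [e1, e2, div_le_div_iff₀ hnT hn0]
    linear_combination h'
  calc (1 / (n:ℝ) ^ T) * ∑ ξ : Fin T → Fin n, |ℓ (w ξ T) z z' - ℓ (w' ξ T) z z'|
      ≤ (1 / (n:ℝ) ^ T) * (L * (∑ ξ ∈ E, ‖w ξ T - w' ξ T‖) + (N.card : ℝ) * ρ) := by
        rw [hsplit]
        exact mul_le_mul_of_nonneg_left (add_le_add hEbound hNbound) (by positivity)
    _ = (1 / (n:ℝ) ^ T) * (L * ∑ ξ ∈ E, ‖w ξ T - w' ξ T‖) +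
        (1 / (n:ℝ) ^ T) * ((N.card : ℝ) * ρ) := by ring
    _ ≤ L * (∑ ξ ∈ E, ‖w ξ T - w' ξ T‖) / (E.card : ℝ) + ((t₀:ℝ) / n) * ρ :=
        add_le_add key1 key2
    _ = ((t₀:ℝ) / n) * ρ + L * (∑ ξ ∈ E, ‖w ξ T - w' ξ T‖) / (E.card : ℝ) := by ring
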